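/- Let F : (0,∞) → ℝ be continuously differentiable and bounded, and suppose there exists M ≥ 0 such that |F'(r) + (2/r) F(r)| ≤ M for all r > 0. Then |F(r)| ≤ (M/3) r for all r > 0; in particular sup_{r>0} |F(r)/r| ≤ (1/3) sup_{r>0} |F'(r) + (2/r) F(r)|. -/

import Mathlib

open Set

theorem hardy_key (F : ℝ → ℝ)
    (hF : ContDiffOn ℝ 1 F (Set.Ioi 0))
    (hbd : ∃ B : ℝ, ∀ r > (0:ℝ), |F r| ≤ B)
    (M : ℝ) (hM₀ : 0 ≤ M)
    (hM : ∀ r > (0:ℝ), |deriv F r + (2 / r) * F r| ≤ M) :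
    ∀ r > (0:ℝ), |F r| ≤ M / 3 * r := by
  obtain ⟨Bb, hBb⟩ := hbd
  have hdiff : ∀ t > (0:ℝ), HasDerivAt F (deriv F t) t := by
    intro t ht
    exact ((hF.differentiableOn one_ne_zero).differentiableAt
      (Ioi_mem_nhds ht)).hasDerivAt
  have hcont : ContinuousOn F (Ioi 0) := hF.continuousOn
  -- G t = t^2 * F t has derivative t^2 * (F' + 2/t F) on positive reals
  have hG : ∀ t > (0:ℝ), HasDerivAt (fun t => t^2 * F t)
      (t^2 * (deriv F t + (2 / t) * F t)) t := by
    intro t ht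
    have h1 : HasDerivAt (fun t : ℝ => t^2) (2 * t) t := by
      simpa using (hasDerivAt_pow 2 t)
    have := h1.mul (hdiff t ht)
    refine this.congr_deriv ?_
    field_simp
    ring
  intro r hr
  -- step: for every ε ∈ (0, r), |r² F r| ≤ ε² |F ε| + M/3 (r³ - ε³)
  have key : ∀ ε ∈ Ioo (0:ℝ) r,
      |r^2 * F r| ≤ ε^2 * Bb + M/3 * r^3 - M/3 * ε^3 := by
    intro ε hε
    obtain ⟨hε0, hεr⟩ := hε
    have hmain := image_norm_le_of_norm_deriv_right_le_deriv_boundary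
      (f := fun t => t^2 * F t)
      (f' := fun t => t^2 * (deriv F t + (2 / t) * F t))
      (a := ε) (b := r)
      (B := fun t => ε^2 * Bb + M/3 * t^3 - M/3 * ε^3)
      (B' := fun t => M * t^2)
      ?_ ?_ ?_ ?_ ?_ ⟨le_of_lt hεr, le_rfl⟩
    · rw [abs_mul, abs_of_nonneg (sq_nonneg r)]; simpa using hmain
    · apply ContinuousOn.mul (continuousOn_pow 2)
      exact hcont.mono (fun x hx => lt_of_lt_of_le hε0 hx.1)
    · intro x hx
      exact ((hG x (lt_of_lt_of_le hε0 hx.1)).hasDerivWithinAt)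
    · have : ‖ε^2 * F ε‖ = ε^2 * |F ε| := by
        rw [Real.norm_eq_abs, abs_mul, abs_of_nonneg (sq_nonneg ε)]
      rw [this]
      have := hBb ε hε0
      nlinarith [sq_nonneg ε, abs_nonneg (F ε)]
    · intro x
      have h1 := (((hasDerivAt_pow 3 x).const_mul (M/3)).const_add
        (ε^2 * Bb)).sub_const (M/3 * ε^3)
      refine h1.congr_deriv ?_
      push_cast; ring
    · intro x hx
      have hx0 : 0 < x := lt_of_lt_of_le hε0 hx.1
      rw [Real.norm_eq_abs, abs_mul, abs_of_nonneg (sq_nonneg x), mul_comm]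
      have := hM x hx0
      nlinarith [sq_nonneg x]
  -- take limit ε → 0⁺
  have hlim : Filter.Tendsto (fun ε : ℝ => ε^2 * Bb + M/3 * r^3 - M/3 * ε^3)
      (nhdsWithin 0 (Ioi 0)) (nhds (M/3 * r^3)) := by
    have hc : Continuous (fun ε : ℝ => ε^2 * Bb + M/3 * r^3 - M/3 * ε^3) := by
      fun_prop
    have : Filter.Tendsto (fun ε : ℝ => ε^2 * Bb + M/3 * r^3 - M/3 * ε^3)
        (nhds 0) (nhds (0^2 * Bb + M/3 * r^3 - M/3 * 0^3)) := hc.tendsto 0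
    simp only [ne_eq, OfNat.ofNat_ne_zero, not_false_eq_true, zero_pow, zero_mul,
      mul_zero, sub_zero, zero_add] at this
    exact this.mono_left nhdsWithin_le_nhds
  have hfinal : |r^2 * F r| ≤ M/3 * r^3 := by
    refine ge_of_tendsto hlim ?_
    filter_upwards [Ioo_mem_nhdsGT_of_mem (Set.left_mem_Ico.2 hr)] with ε hε
    exact key ε hε
  have : |F r| * r^2 ≤ M/3 * r^3 := by
    rwa [abs_mul, abs_of_nonneg (sq_nonneg r), mul_comm] at hfinal
  nlinarith [pow_pos hr 2, this]

/-- The `L^∞` case of Lemma 2.4 of the paper: a Hardy-type inequality for the radial profile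
`F` of a bounded radial function on `ℝ³`. If `|F' + (2/r) F| ≤ M` on `(0, ∞)` then
`|F(r)| ≤ (M/3) r`, and in particular `sup |F(r)/r| ≤ (1/3) sup |F'(r) + (2/r) F(r)|`. -/
theorem hardy_radial_Linfty (F : ℝ → ℝ)
    (hF : ContDiffOn ℝ 1 F (Set.Ioi 0))
    (hbd : ∃ B : ℝ, ∀ r > (0:ℝ), |F r| ≤ B)
    (M : ℝ) (hM₀ : 0 ≤ M)
    (hM : ∀ r > (0:ℝ), |deriv F r + (2 / r) * F r| ≤ M) :
    (∀ r > (0:ℝ), |F r| ≤ M / 3 * r) ∧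
      (⨆ r : {r : ℝ // 0 < r}, |F r.1 / r.1|)
        ≤ (1 / 3) * ⨆ r : {r : ℝ // 0 < r}, |deriv F r.1 + (2 / r.1) * F r.1| := by
  refine ⟨hardy_key F hF hbd M hM₀ hM, ?_⟩
  set S := ⨆ r : {r : ℝ // 0 < r}, |deriv F r.1 + (2 / r.1) * F r.1| with hS
  have hbdd : BddAbove (Set.range fun r : {r : ℝ // 0 < r} =>
      |deriv F r.1 + (2 / r.1) * F r.1|) := by
    refine ⟨M, ?_⟩
    rintro _ ⟨r, rfl⟩
    exact hM r.1 r.2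
  have hSle : ∀ r > (0:ℝ), |deriv F r + (2 / r) * F r| ≤ S := by
    intro r hr
    exact le_ciSup hbdd ⟨r, hr⟩
  have hS0 : 0 ≤ S := le_trans (abs_nonneg _) (hSle 1 one_pos)
  have hkey := hardy_key F hF hbd S hS0 hSle
  refine ciSup_le ?_
  rintro ⟨r, hr⟩
  have := hkey r hr
  rw [abs_div, abs_of_pos hr, div_le_iff₀ hr]
  calc |F r| ≤ S / 3 * r := this
    _ = 1 / 3 * S * r := by ring
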